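/- (1) If a routing matrix q together with (ē, f̄, ā) is feasible for the fluid-based optimization problem, then (ē, f̄, ā) satisfies the relaxed constraints together with the complementarity constraint. (2) Conversely, suppose (ē, f̄, ā) satisfies the relaxed constraints together with the complementarity constraint, and suppose Σ_k μ_{ki} f̄_{ki} > 0 for every i. Define q_{ij} = μ_{ij} ē_{ij} / (Σ_k μ_{ki} f̄_{ki}) for i ≠ j and q_{ii} = (λ_i ā_i − Σ_{k≠i} μ_{ki} ē_{ki}) / (Σ_k μ_{ki} f̄_{ki}). Then q is a routing matrix (entries nonnegative, rows summing to one) and (q, ē, f̄, ā) is feasible for the fluid-based optimization problem. -/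

import Mathlib

open Finset Filter Topology MeasureTheory

abbrev Mat (r : ℕ) := Fin r → Fin r → ℝ

/-- The network primitives: per-car arrival rates `lam`, travel rates `mu`,
and the row-stochastic destination matrix `P`. -/
structure NetParams (r : ℕ) where
  lam : Fin r → ℝ
  mu : Mat r
  P : Mat r
  lam_pos : ∀ i, 0 < lam i
  mu_pos : ∀ i j, 0 < mu i j
  P_nonneg : ∀ i j, 0 ≤ P i j
  P_rowsum : ∀ i, ∑ j, P i j = 1

/-- `q` is a routing matrix: nonnegative entries with rows summing to one. -/
def IsRouting {r : ℕ} (q : Mat r) : Prop :=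
  (∀ i j, 0 ≤ q i j) ∧ ∀ i, ∑ j, q i j = 1

/-- `(e, f)` belongs to the set 𝒯. -/
def MemT {r : ℕ} (e f : Mat r) : Prop :=
  (∀ i j, e i j ∈ Set.Icc (0:ℝ) 1) ∧ (∀ i j, f i j ∈ Set.Icc (0:ℝ) 1) ∧
    (∑ i, ∑ j, (e i j + f i j)) = 1

/-- `(q, ebar, fbar, abar)` is feasible for the fluid-based optimization problem. -/
def FluidFeasible {r : ℕ} (np : NetParams r) (q ebar fbar : Mat r)
    (abar : Fin r → ℝ) : Prop :=
  IsRouting q ∧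
  (∀ i j, np.lam i * np.P i j * abar i = np.mu i j * fbar i j) ∧
  (∀ i j, i ≠ j → np.mu i j * ebar i j = q i j * ∑ k, np.mu k i * fbar k i) ∧
  (∀ i, np.lam i * abar i =
    (∑ k ∈ Finset.univ.filter (fun k => k ≠ i), np.mu k i * ebar k i)
      + q i i * ∑ k, np.mu k i * fbar k i) ∧
  (∀ i, (1 - abar i) * ebar i i = 0) ∧
  MemT ebar fbar ∧
  (∀ i, 0 ≤ abar i ∧ abar i ≤ 1)

/-- The objective value `U(ā) = Σ_{i,j} ā_i λ_i P_{ij} c_{ij}`. -/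
noncomputable def objU {r : ℕ} (np : NetParams r) (c : Mat r) (abar : Fin r → ℝ) : ℝ :=
  ∑ i, ∑ j, abar i * np.lam i * np.P i j * c i j

/-- `(ebar, fbar, abar)` satisfies the relaxed constraints. -/
def RelaxedFeasible {r : ℕ} (np : NetParams r) (ebar fbar : Mat r)
    (abar : Fin r → ℝ) : Prop :=
  (∀ i j, np.lam i * np.P i j * abar i = np.mu i j * fbar i j) ∧
  (∀ i j, i ≠ j → np.mu i j * ebar i j ≤ ∑ k, np.mu k i * fbar k i) ∧
  (∀ i, (∑ k ∈ Finset.univ.filter (fun k => k ≠ i), np.mu k i * ebar k i)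
      ≤ np.lam i * abar i) ∧
  (∀ i, np.lam i * abar i ≤
    (∑ k ∈ Finset.univ.filter (fun k => k ≠ i), np.mu k i * ebar k i)
      + ∑ k, np.mu k i * fbar k i) ∧
  (∀ i, np.lam i * abar i
      + (∑ j ∈ Finset.univ.filter (fun j => j ≠ i), np.mu i j * ebar i j)
    = (∑ k ∈ Finset.univ.filter (fun k => k ≠ i), np.mu k i * ebar k i)
      + ∑ k, np.mu k i * fbar k i) ∧
  MemT ebar fbar ∧
  (∀ i, 0 ≤ abar i ∧ abar i ≤ 1)

/-- The complementarity constraint `(1 − ā_i) ē_{ii} = 0` for all `i`. -/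
def Complementarity {r : ℕ} (ebar : Mat r) (abar : Fin r → ℝ) : Prop :=
  ∀ i, (1 - abar i) * ebar i i = 0

/-- The routing matrix recovered from a solution of the relaxed constraints,
via equation (rp:intra). -/
noncomputable def qRecover {r : ℕ} (np : NetParams r) (ebar fbar : Mat r)
    (abar : Fin r → ℝ) : Mat r :=
  fun i j =>
    if i = j then
      (np.lam i * abar i
          - ∑ k ∈ Finset.univ.filter (fun k => k ≠ i), np.mu k i * ebar k i)
        / (∑ k, np.mu k i * fbar k i)
    else np.mu i j * ebar i j / (∑ k, np.mu k i * fbar k i)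

lemma sum_filter_ne_eq {r : ℕ} (g : Fin r → ℝ) (i : Fin r) :
    ∑ j ∈ Finset.univ.filter (fun j => j ≠ i), g j = (∑ j, g j) - g i := by
  rw [Finset.filter_ne', Finset.sum_erase_eq_sub (Finset.mem_univ i)]

/-- Lemma 1 (relax0): the fluid-based feasibility constraints are equivalent to the
relaxed constraints together with the complementarity constraint, with the routing
matrix recovered by `qRecover` in the converse direction. -/
theorem stmt_3 {r : ℕ} (hr : 1 ≤ r) (np : NetParams r) :
    (∀ (q ebar fbar : Mat r) (abar : Fin r → ℝ),
        FluidFeasible np q ebar fbar abar →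
          RelaxedFeasible np ebar fbar abar ∧ Complementarity ebar abar) ∧
    (∀ (ebar fbar : Mat r) (abar : Fin r → ℝ),
        RelaxedFeasible np ebar fbar abar → Complementarity ebar abar →
        (∀ i, 0 < ∑ k, np.mu k i * fbar k i) →
          IsRouting (qRecover np ebar fbar abar) ∧
            FluidFeasible np (qRecover np ebar fbar abar) ebar fbar abar) := by
  constructor
  · rintro q ebar fbar abar ⟨⟨hqnn, hqsum⟩, hflow, hintra, hself, hcomp, hT, hab⟩
    have hSnn : ∀ i, 0 ≤ ∑ k, np.mu k i * fbar k i := fun i =>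
      Finset.sum_nonneg fun k _ => mul_nonneg (np.mu_pos k i).le ((hT.2.1 k i).1)
    have hqle1 : ∀ i j, q i j ≤ 1 := by
      intro i j
      calc q i j ≤ ∑ k, q i k :=
            Finset.single_le_sum (fun k _ => hqnn i k) (Finset.mem_univ j)
        _ = 1 := hqsum i
    refine ⟨⟨hflow, ?_, ?_, ?_, ?_, hT, hab⟩, hcomp⟩
    · intro i j hij
      rw [hintra i j hij]
      calc q i j * (∑ k, np.mu k i * fbar k i)
          ≤ 1 * (∑ k, np.mu k i * fbar k i) :=
            mul_le_mul_of_nonneg_right (hqle1 i j) (hSnn i)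
        _ = ∑ k, np.mu k i * fbar k i := one_mul _
    · intro i
      have := mul_nonneg (hqnn i i) (hSnn i)
      linarith [hself i]
    · intro i
      have h1 : q i i * (∑ k, np.mu k i * fbar k i) ≤ ∑ k, np.mu k i * fbar k i := by
        calc q i i * (∑ k, np.mu k i * fbar k i)
            ≤ 1 * (∑ k, np.mu k i * fbar k i) :=
              mul_le_mul_of_nonneg_right (hqle1 i i) (hSnn i)
          _ = _ := one_mul _
      linarith [hself i]
    · intro i
      have hsum : ∑ j ∈ Finset.univ.filter (fun j => j ≠ i), np.mu i j * ebar i j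
          = (1 - q i i) * (∑ k, np.mu k i * fbar k i) := by
        have : ∀ j ∈ Finset.univ.filter (fun j => j ≠ i),
            np.mu i j * ebar i j = q i j * (∑ k, np.mu k i * fbar k i) := by
          intro j hj
          exact hintra i j (Finset.mem_filter.mp hj).2.symm ▸ hintra i j ((Finset.mem_filter.mp hj).2).symm
        rw [Finset.sum_congr rfl this, ← Finset.sum_mul,
          sum_filter_ne_eq (fun j => q i j) i, hqsum i]
      linarith [hself i, hsum]
  · rintro ebar fbar abar ⟨hflow, hle, hlow, hup, heq, hT, hab⟩ hcomp hSpos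
    set S : Fin r → ℝ := fun i => ∑ k, np.mu k i * fbar k i with hS
    have hroute : IsRouting (qRecover np ebar fbar abar) := by
      constructor
      · intro i j
        unfold qRecover
        by_cases h : i = j
        · rw [if_pos h]
          subst h
          exact div_nonneg (sub_nonneg.mpr (hlow i)) (hSpos i).le
        · rw [if_neg h]
          exact div_nonneg (mul_nonneg (np.mu_pos i j).le ((hT.1 i j).1)) (hSpos i).le
      · intro i
        rw [← Finset.add_sum_erase _ _ (Finset.mem_univ i)]
        have h1 : ∑ j ∈ Finset.univ.erase i, qRecover np ebar fbar abar i j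
            = (∑ j ∈ Finset.univ.filter (fun j => j ≠ i), np.mu i j * ebar i j)
              / (∑ k, np.mu k i * fbar k i) := by
          rw [← Finset.filter_ne', Finset.sum_div]
          refine Finset.sum_congr rfl fun j hj => ?_
          have hij : i ≠ j := fun h => (Finset.mem_filter.mp hj).2 h.symm
          simp [qRecover, hij]
        rw [h1]
        simp only [qRecover, eq_self_iff_true, if_true]
        rw [← add_div, div_eq_one_iff_eq (hSpos i).ne']
        linarith [heq i]
    refine ⟨hroute, hroute, hflow, ?_, ?_, hcomp, hT, hab⟩
    · intro i j hij
      simp only [qRecover, if_neg hij]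
      rw [div_mul_cancel₀ _ (hSpos i).ne']
    · intro i
      simp only [qRecover, eq_self_iff_true, if_true]
      rw [div_mul_cancel₀ _ (hSpos i).ne']
      ring
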